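/- Let (λᵢ)_{i≥1} be a nonincreasing sequence of nonnegative reals summing to 1 (Schmidt coefficients squared), and suppose there is an increasing sequence of integers R₀ ≤ R₁ ≤ ... such that Σ_{i ≤ R_k} λᵢ ≥ 1 − C·2^{−k} for all k ≥ 0 and some constant C with C·2⁰ ≤ 1. Then the entropy S = −Σᵢ λᵢ log λᵢ satisfies S ≤ log R₀ + Σ_{k≥1} C·2^{−(k−1)}·log R_k + O(1), provided the series converges. -/

import Mathlib

lemma aux_negMulLog_le_two_sqrt {x : ℝ} (hx : 0 ≤ x) :
    Real.negMulLog x ≤ 2 * Real.sqrt x := by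
  rcases hx.eq_or_lt with h | h
  · simp [← h]
  · have hs : 0 < Real.sqrt x := Real.sqrt_pos.2 h
    have h1 : Real.log (Real.sqrt x)⁻¹ ≤ (Real.sqrt x)⁻¹ := by
      have := Real.log_le_sub_one_of_pos (inv_pos.2 hs)
      linarith
    have h2 : Real.negMulLog x = 2 * (x * Real.log (Real.sqrt x)⁻¹) := by
      rw [Real.log_inv, Real.log_sqrt hx]
      unfold Real.negMulLog
      ring
    rw [h2]
    have h3 : x * Real.log (Real.sqrt x)⁻¹ ≤ x * (Real.sqrt x)⁻¹ :=
      mul_le_mul_of_nonneg_left h1 hx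
    have h4 : x * (Real.sqrt x)⁻¹ = Real.sqrt x := by
      rw [← div_eq_mul_inv, Real.div_sqrt]
    linarith

lemma aux_jensen_block (lam : ℕ → ℝ) (hnn : ∀ i, 0 ≤ lam i) (t : Finset ℕ) :
    ∑ i ∈ t, Real.negMulLog (lam i) ≤
      (∑ i ∈ t, lam i) * Real.log t.card + Real.negMulLog (∑ i ∈ t, lam i) := by
  rcases t.eq_empty_or_nonempty with rfl | ht
  · simp
  · set n : ℕ := t.card with hn
    have hn0 : 0 < (n : ℝ) := by exact_mod_cast Finset.card_pos.2 ht
    set m : ℝ := ∑ i ∈ t, lam i with hm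
    have hm0 : 0 ≤ m := Finset.sum_nonneg fun i _ => hnn i
    have hjen := Real.concaveOn_negMulLog.le_map_sum (t := t)
      (w := fun _ => (n : ℝ)⁻¹) (p := lam)
      (fun i _ => by positivity)
      (by simp [Finset.sum_const, hn]; field_simp)
      (fun i _ => Set.mem_Ici.2 (hnn i))
    simp only [smul_eq_mul, ← Finset.mul_sum] at hjen
    have key : ∑ i ∈ t, Real.negMulLog (lam i) ≤ (n:ℝ) * Real.negMulLog ((n:ℝ)⁻¹ * m) := by
      rw [inv_mul_le_iff₀ hn0] at hjen
      exact hjen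
    rcases hm0.eq_or_lt with hm0' | hm0'
    · rw [← hm0'] at key ⊢
      simpa using key
    · refine key.trans_eq ?_
      unfold Real.negMulLog
      rw [Real.log_mul (by positivity) (ne_of_gt hm0'), Real.log_inv]
      field_simp
      ring

/-- Entropy bound from a sequence of low-rank approximations: if the top `R k` Schmidt
weights capture all but `C·2^{-k}` of the mass, the entropy is bounded by
`log R₀ + Σ_{k≥1} C·2^{-(k-1)} log R_k + O(1)`. -/
theorem entropy_bound_from_rank_sequence :
    ∃ c : ℝ, ∀ (lam : ℕ → ℝ) (R : ℕ → ℕ) (C : ℝ),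
      (∀ i, 0 ≤ lam i) → Antitone lam → Summable lam → (∑' i, lam i) = 1 →
      Monotone R → 0 ≤ C → C * 2 ^ (-(0 : ℝ)) ≤ 1 →
      (∀ k : ℕ, 1 - C * 2 ^ (-(k : ℝ)) ≤ ∑ i ∈ Finset.range (R k), lam i) →
      Summable (fun i => -(lam i * Real.log (lam i))) →
      Summable (fun k : ℕ => C * 2 ^ (-((k : ℝ) + 1 - 1)) * Real.log (R (k + 1))) →
      (∑' i, -(lam i * Real.log (lam i))) ≤
        Real.log (R 0) +
          (∑' k : ℕ, C * 2 ^ (-((k : ℝ) + 1 - 1)) * Real.log (R (k + 1))) + c := by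
  use 10
  intro lam R C hnn hant hsum hsum1 hmono hC0 hC1 hrank hS hSk
  have hlam1 : ∀ i, lam i ≤ 1 := by
    intro i
    have := hsum.le_tsum i (fun j _ => hnn j)
    rw [hsum1] at this; exact this
  have hf0 : ∀ i, 0 ≤ Real.negMulLog (lam i) := fun i =>
    Real.negMulLog_nonneg (hnn i) (hlam1 i)
  have hC : C ≤ 1 := by simpa using hC1
  have hpow : ∀ k : ℕ, (2:ℝ) ^ (-(k:ℝ)) = (1/2:ℝ)^k := by
    intro k
    rw [Real.rpow_neg (by norm_num : (0:ℝ) ≤ 2), Real.rpow_natCast]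
    simp [one_div, inv_pow]
  have hpow_nn : ∀ k : ℕ, (0:ℝ) ≤ C * 2 ^ (-(k:ℝ)) := fun k => by
    rw [hpow]; positivity
  have hlogR : ∀ k : ℕ, 0 ≤ Real.log (R k) := fun k => Real.log_natCast_nonneg _
  have hpart1 : ∀ N, ∑ i ∈ Finset.range N, lam i ≤ 1 := by
    intro N
    have := hsum.sum_le_tsum (Finset.range N) (fun i _ => hnn i)
    rw [hsum1] at this; exact this
  have htail : ∀ k N, R k ≤ N → ∑ i ∈ Finset.Ico (R k) N, lam i ≤ C * 2 ^ (-(k:ℝ)) := by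
    intro k N h
    have h1 := hpart1 N
    have h2 := hrank k
    have h3 : ∑ i ∈ Finset.range (R k), lam i + ∑ i ∈ Finset.Ico (R k) N, lam i
        = ∑ i ∈ Finset.range N, lam i := by
      rw [Finset.range_eq_Ico, Finset.range_eq_Ico]
      exact Finset.sum_Ico_consecutive _ (Nat.zero_le _) h
    linarith
  -- per-block bound
  have hblock : ∀ k, ∑ i ∈ Finset.Ico (R k) (R (k+1)), Real.negMulLog (lam i) ≤
      C * 2 ^ (-(k:ℝ)) * Real.log (R (k+1)) + 2 * (3/4:ℝ)^k := by
    intro k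
    have hcard : (Finset.Ico (R k) (R (k+1))).card = R (k+1) - R k := Nat.card_Ico _ _
    have hj := aux_jensen_block lam hnn (Finset.Ico (R k) (R (k+1)))
    rw [hcard] at hj
    set m := ∑ i ∈ Finset.Ico (R k) (R (k+1)), lam i with hm
    have hm0 : 0 ≤ m := Finset.sum_nonneg fun i _ => hnn i
    have hmle : m ≤ C * 2 ^ (-(k:ℝ)) := htail k _ (hmono (Nat.le_succ k))
    have h1 : m * Real.log ((R (k+1) - R k : ℕ) : ℝ) ≤
        C * 2 ^ (-(k:ℝ)) * Real.log (R (k+1)) := by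
      rcases Nat.eq_zero_or_pos (R (k+1) - R k) with h0 | h0
      · rw [h0]
        simpa using mul_nonneg (hpow_nn k) (hlogR (k+1))
      · have hlog1 : Real.log ((R (k+1) - R k : ℕ) : ℝ) ≤ Real.log (R (k+1)) :=
          Real.log_le_log (by exact_mod_cast h0) (by exact_mod_cast Nat.sub_le _ _)
        have hlognn : 0 ≤ Real.log ((R (k+1) - R k : ℕ) : ℝ) := Real.log_natCast_nonneg _
        exact mul_le_mul hmle hlog1 hlognn (hpow_nn k)
    have h2 : Real.negMulLog m ≤ 2 * (3/4:ℝ)^k := by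
      have hb := aux_negMulLog_le_two_sqrt hm0
      have hsq : Real.sqrt m ≤ (3/4:ℝ)^k := by
        rw [Real.sqrt_le_iff]
        refine ⟨by positivity, ?_⟩
        have e1 : ((3/4:ℝ)^k)^2 = (9/16:ℝ)^k := by
          rw [sq, ← mul_pow]; norm_num
        rw [e1]
        calc m ≤ C * 2 ^ (-(k:ℝ)) := hmle
          _ ≤ (1/2:ℝ)^k := by
              rw [hpow]
              nlinarith [pow_nonneg (by norm_num : (0:ℝ) ≤ 1/2) k]
          _ ≤ (9/16:ℝ)^k := pow_le_pow_left₀ (by norm_num) (by norm_num) k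
      linarith
    linarith
  -- main finite bound at block boundaries
  have hmain : ∀ K, ∑ i ∈ Finset.range (R K), Real.negMulLog (lam i) ≤
      Real.log (R 0) + (∑ k ∈ Finset.range K, C * 2 ^ (-(k:ℝ)) * Real.log (R (k+1)))
        + (2 + ∑ k ∈ Finset.range K, 2 * (3/4:ℝ)^k) := by
    intro K
    induction K with
    | zero =>
      simp only [Finset.range_zero, Finset.sum_empty, add_zero]
      have hj := aux_jensen_block lam hnn (Finset.range (R 0))
      rw [Finset.card_range] at hj
      set m := ∑ i ∈ Finset.range (R 0), lam i with hm
      have hm0 : 0 ≤ m := Finset.sum_nonneg fun i _ => hnn i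
      have hm1 : m ≤ 1 := hpart1 _
      have h1 : m * Real.log (R 0) ≤ Real.log (R 0) := by
        nlinarith [hlogR 0]
      have h2 : Real.negMulLog m ≤ 2 := by
        have hb := aux_negMulLog_le_two_sqrt hm0
        have hs1 : Real.sqrt m ≤ 1 := by
          rw [show (1:ℝ) = Real.sqrt 1 by simp]
          exact Real.sqrt_le_sqrt hm1
        linarith
      linarith
    | succ K ih =>
      have hsplit : ∑ i ∈ Finset.range (R (K+1)), Real.negMulLog (lam i)
          = ∑ i ∈ Finset.range (R K), Real.negMulLog (lam i)
            + ∑ i ∈ Finset.Ico (R K) (R (K+1)), Real.negMulLog (lam i) := by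
        rw [Finset.range_eq_Ico, Finset.range_eq_Ico]
        exact (Finset.sum_Ico_consecutive _ (Nat.zero_le _) (hmono (Nat.le_succ K))).symm
      rw [hsplit, Finset.sum_range_succ, Finset.sum_range_succ]
      have := hblock K
      linarith
  have hgeo : ∀ K, ∑ k ∈ Finset.range K, 2 * (3/4:ℝ)^k ≤ 8 := by
    intro K
    have h1 : ∑ k ∈ Finset.range K, (3/4:ℝ)^k ≤ 4 := by
      have h2 := (summable_geometric_of_lt_one (by norm_num) (by norm_num : (3/4:ℝ) < 1)).sum_le_tsum
        (Finset.range K) (fun k _ => by positivity)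
      rw [tsum_geometric_of_lt_one (by norm_num) (by norm_num : (3/4:ℝ) < 1)] at h2
      norm_num at h2
      exact h2
    have : ∑ k ∈ Finset.range K, 2 * (3/4:ℝ)^k = 2 * ∑ k ∈ Finset.range K, (3/4:ℝ)^k := by
      rw [Finset.mul_sum]
    linarith
  have hfun : (fun k : ℕ => C * 2 ^ (-((k:ℝ) + 1 - 1)) * Real.log ((R (k+1) : ℕ) : ℝ))
      = fun k : ℕ => C * 2 ^ (-(k:ℝ)) * Real.log ((R (k+1) : ℕ) : ℝ) := by
    funext k; norm_num
  rw [hfun] at hSk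
  have hsumtsum : ∀ K, ∑ k ∈ Finset.range K, C * 2 ^ (-(k:ℝ)) * Real.log (R (k+1))
      ≤ ∑' k : ℕ, C * 2 ^ (-(k:ℝ)) * Real.log (R (k+1)) :=
    fun K => hSk.sum_le_tsum _ (fun k _ => mul_nonneg (hpow_nn k) (hlogR _))
  set B := Real.log (R 0) + (∑' k : ℕ, C * 2 ^ (-(k:ℝ)) * Real.log (R (k+1))) + 10 with hB
  have hRbound : ∀ K, ∑ i ∈ Finset.range (R K), Real.negMulLog (lam i) ≤ B := by
    intro K
    have h1 := hmain K
    have h2 := hgeo K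
    have h3 := hsumtsum K
    rw [hB]; linarith
  have hN : ∀ N, ∑ i ∈ Finset.range N, Real.negMulLog (lam i) ≤ B := by
    intro N
    by_cases hex : ∃ K, N ≤ R K
    · obtain ⟨K, hK⟩ := hex
      exact le_trans (Finset.sum_le_sum_of_subset_of_nonneg
        (Finset.range_subset_range.2 hK) (fun i _ _ => hf0 i)) (hRbound K)
    · push_neg at hex
      have hbdd : BddAbove (Set.range R) := by
        refine ⟨N, fun x hx => ?_⟩
        obtain ⟨k, rfl⟩ := hx
        exact (hex k).le
      obtain ⟨K0, hK0⟩ := Nat.sSup_mem (Set.range_nonempty R) hbdd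
      set M := sSup (Set.range R) with hMdef
      have hRM : ∀ k, R k ≤ M := fun k => le_csSup hbdd (Set.mem_range_self k)
      have hMN : M ≤ N := by rw [← hK0]; exact (hex K0).le
      have hsum0 : ∑ i ∈ Finset.Ico M N, lam i = 0 := by
        have hm0 : 0 ≤ ∑ i ∈ Finset.Ico M N, lam i :=
          Finset.sum_nonneg fun i _ => hnn i
        by_contra h
        have hpos : 0 < ∑ i ∈ Finset.Ico M N, lam i := hm0.lt_of_ne (Ne.symm h)
        obtain ⟨n, hn⟩ := exists_pow_lt_of_lt_one hpos (by norm_num : (1/2:ℝ) < 1)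
        have hk : R (max n K0) = M :=
          le_antisymm (hRM _) (hK0 ▸ hmono (le_max_right n K0))
        have h1 := htail (max n K0) N (hk ▸ hMN)
        rw [hpow, hk] at h1
        have h2 : ((1:ℝ)/2)^(max n K0) ≤ (1/2:ℝ)^n :=
          pow_le_pow_of_le_one (by norm_num) (by norm_num) (le_max_left n K0)
        have h3 : (0:ℝ) ≤ (1/2:ℝ)^(max n K0) := by positivity
        nlinarith
      have hfz : ∑ i ∈ Finset.Ico M N, Real.negMulLog (lam i) = 0 := by
        refine Finset.sum_eq_zero fun i hi => ?_
        have := (Finset.sum_eq_zero_iff_of_nonneg (fun j _ => hnn j)).1 hsum0 i hi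
        rw [this]; simp
      have heq : ∑ i ∈ Finset.range N, Real.negMulLog (lam i)
          = ∑ i ∈ Finset.range M, Real.negMulLog (lam i) := by
        rw [Finset.range_eq_Ico, ← Finset.sum_Ico_consecutive _ (Nat.zero_le M) hMN, hfz,
          add_zero, ← Finset.range_eq_Ico]
      rw [heq, ← hK0]
      exact hRbound K0
  have hgoal : (∑' i, -(lam i * Real.log (lam i))) = ∑' i, Real.negMulLog (lam i) :=
    tsum_congr fun i => by rw [Real.negMulLog_eq_neg]
  rw [hfun, hgoal]
  rw [hB] at hN
  exact Real.tsum_le_of_sum_range_le hf0 hN
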